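/- Let E ∈ ℝ² with E ≠ 0, let R, X ∈ ℝ, and let Imax > 0. Define P(x) := (3/2)R‖x‖² + (3/2)⟨E,x⟩ and Q(x) := (3/2)X‖x‖² + (3/2)⟨JE,x⟩ for x ∈ ℝ². Then the image set { (P(x), Q(x)) : x ∈ ℝ², ‖x‖ ≤ Imax } is a convex subset of ℝ². -/

import Mathlib

open scoped RealInnerProductSpace

/-- The matrix `J` with rows `(0,1)` and `(-1,0)`. -/
def Jmat : Matrix (Fin 2) (Fin 2) ℝ := !![0, 1; -1, 0]

/-- Interpret a plain vector `Fin 2 → ℝ` as an element of Euclidean space `ℝ²`. -/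
noncomputable def toE (v : Fin 2 → ℝ) : EuclideanSpace ℝ (Fin 2) := WithLp.toLp 2 v

/-- The vector `J E ∈ ℝ²`. -/
noncomputable def Jv (E : EuclideanSpace ℝ (Fin 2)) : EuclideanSpace ℝ (Fin 2) :=
  toE (Jmat.mulVec (fun i => E i))

lemma memS_iff (c e : ℂ) (he : e ≠ 0) (Imax : ℝ) (w : ℂ) :
    (∃ u : ℂ, ‖u‖ ≤ Imax ∧ w = c * (‖u‖ : ℂ)^2 + e * u) ↔
    (∃ r : ℝ, 0 ≤ r ∧ r ≤ Imax ∧ ‖w - c * (r : ℂ)^2‖ ≤ ‖e‖ * r) := by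
  constructor
  · rintro ⟨u, hu, rfl⟩
    refine ⟨‖u‖, norm_nonneg _, hu, ?_⟩
    simp [norm_mul]
  · rintro ⟨r, hr0, hrI, hr⟩
    set g : ℝ → ℝ := fun s => ‖w - c * (s : ℂ)^2‖ - ‖e‖ * s with hg
    have hcont : ContinuousOn g (Set.Icc 0 r) := by
      apply Continuous.continuousOn
      fun_prop
    have h0 : (0:ℝ) ∈ Set.Icc (g r) (g 0) := by
      constructor
      · simpa [g] using hr
      · simp [g]
    obtain ⟨s, hs, hgs⟩ := intermediate_value_Icc' hr0 hcont h0
    have hs0 : 0 ≤ s := hs.1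
    have heq : ‖w - c * (s:ℂ)^2‖ = ‖e‖ * s := by
      have := hgs
      simp only [g] at this
      linarith
    have habs : ‖e‖ ≠ 0 := by
      exact norm_ne_zero_iff.mpr he
    refine ⟨(w - c * (s:ℂ)^2) / e, ?_, ?_⟩
    · have : ‖(w - c * (s:ℂ)^2) / e‖ = s := by
        rw [norm_div, heq]
        rw [mul_div_assoc, mul_comm]
        exact div_mul_cancel₀ s (norm_ne_zero_iff.mpr he)
      rw [this]; exact hs.2.trans hrI
    · have hnorm : ‖(w - c * (s:ℂ)^2) / e‖ = s := by
        rw [norm_div, heq, mul_div_assoc, mul_comm]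
        exact div_mul_cancel₀ s (norm_ne_zero_iff.mpr he)
      rw [hnorm]
      field_simp
      ring

lemma convex_disks (c : ℂ) (ne : ℝ) (hne : 0 ≤ ne) (Imax : ℝ) :
    Convex ℝ {w : ℂ | ∃ r : ℝ, 0 ≤ r ∧ r ≤ Imax ∧ ‖w - c * (r : ℂ)^2‖ ≤ ne * r} := by
  rintro w₁ ⟨r₁, hr₁0, hr₁I, h₁⟩ w₂ ⟨r₂, hr₂0, hr₂I, h₂⟩ a b ha hb hab
  set s : ℝ := Real.sqrt (a * r₁^2 + b * r₂^2) with hs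
  have hsum0 : 0 ≤ a * r₁^2 + b * r₂^2 := by positivity
  have hs0 : 0 ≤ s := Real.sqrt_nonneg _
  have hssq : s^2 = a * r₁^2 + b * r₂^2 := Real.sq_sqrt hsum0
  have hI0 : 0 ≤ Imax := le_trans hr₁0 hr₁I
  have hsI : s ≤ Imax := by
    have e1 := mul_le_mul_of_nonneg_left (pow_le_pow_left₀ hr₁0 hr₁I 2) ha
    have e2 := mul_le_mul_of_nonneg_left (pow_le_pow_left₀ hr₂0 hr₂I 2) hb
    have h1 : a * r₁^2 + b * r₂^2 ≤ Imax^2 := by nlinarith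
    calc s ≤ Real.sqrt (Imax^2) := Real.sqrt_le_sqrt h1
    _ = Imax := Real.sqrt_sq hI0
  have hlin : a * r₁ + b * r₂ ≤ s := by
    have h1 : (a * r₁ + b * r₂)^2 ≤ a * r₁^2 + b * r₂^2 := by nlinarith [sq_nonneg (r₁ - r₂), mul_nonneg ha hb]
    calc a * r₁ + b * r₂ = Real.sqrt ((a * r₁ + b * r₂)^2) := (Real.sqrt_sq (by positivity)).symm
    _ ≤ s := Real.sqrt_le_sqrt h1
  refine ⟨s, hs0, hsI, ?_⟩
  have key : a • w₁ + b • w₂ - c * (s:ℂ)^2 = a • (w₁ - c * (r₁:ℂ)^2) + b • (w₂ - c * (r₂:ℂ)^2) := by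
    have h2 : ((s:ℂ))^2 = (a:ℂ) * (r₁:ℂ)^2 + (b:ℂ) * (r₂:ℂ)^2 := by
      exact_mod_cast congrArg (fun t : ℝ => (t : ℂ)) hssq
    have h3 : (a:ℂ) + (b:ℂ) = 1 := by exact_mod_cast hab
    rw [h2]
    simp only [Complex.real_smul]
    linear_combination (w₂ - c * (r₂:ℂ)^2 - (w₁ - c * (r₁:ℂ)^2)) * 0 + c * 0 + (w₁*0) + ((1 - (a:ℂ) - (b:ℂ)) * 0) + (h3 - h3) * 0 + (0:ℂ)
  rw [key]
  calc ‖a • (w₁ - c * (r₁:ℂ)^2) + b • (w₂ - c * (r₂:ℂ)^2)‖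
      ≤ ‖a • (w₁ - c * (r₁:ℂ)^2)‖ + ‖b • (w₂ - c * (r₂:ℂ)^2)‖ := norm_add_le _ _
    _ = a * ‖w₁ - c * (r₁:ℂ)^2‖ + b * ‖w₂ - c * (r₂:ℂ)^2‖ := by
        rw [norm_smul, norm_smul, Real.norm_of_nonneg ha, Real.norm_of_nonneg hb]
    _ ≤ a * (ne * r₁) + b * (ne * r₂) := by
        gcongr
    _ = ne * (a * r₁ + b * r₂) := by ring
    _ ≤ ne * s := by
        exact mul_le_mul_of_nonneg_left hlin hne

lemma convexS (c e : ℂ) (he : e ≠ 0) (Imax : ℝ) :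
    Convex ℝ {w : ℂ | ∃ u : ℂ, ‖u‖ ≤ Imax ∧ w = c * (‖u‖ : ℂ)^2 + e * u} := by
  have : {w : ℂ | ∃ u : ℂ, ‖u‖ ≤ Imax ∧ w = c * (‖u‖ : ℂ)^2 + e * u}
      = {w : ℂ | ∃ r : ℝ, 0 ≤ r ∧ r ≤ Imax ∧ ‖w - c * (r : ℂ)^2‖ ≤ ‖e‖ * r} := by
    ext w; exact memS_iff c e he Imax w
  rw [this]
  exact convex_disks c ‖e‖ (norm_nonneg e) Imax


lemma norm_sq_euc (x : EuclideanSpace ℝ (Fin 2)) : ‖x‖^2 = (x 0)^2 + (x 1)^2 := by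
  rw [EuclideanSpace.norm_eq, Real.sq_sqrt (by positivity)]
  simp [Fin.sum_univ_two, sq_abs]

lemma inner_euc (E x : EuclideanSpace ℝ (Fin 2)) : ⟪E, x⟫ = E 0 * x 0 + E 1 * x 1 := by
  simp [PiLp.inner_apply, Fin.sum_univ_two, RCLike.inner_apply]
  ring

lemma Jv0 (E : EuclideanSpace ℝ (Fin 2)) : (Jv E) 0 = E 1 := by
  simp [Jv, toE, Jmat, Matrix.mulVec, dotProduct, Fin.sum_univ_two]

lemma Jv1 (E : EuclideanSpace ℝ (Fin 2)) : (Jv E) 1 = -(E 0) := by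
  simp [Jv, toE, Jmat, Matrix.mulVec, dotProduct, Fin.sum_univ_two]

lemma norm_c (a b : ℝ) : ‖((a:ℂ) + (b:ℂ)*Complex.I)‖^2 = a^2 + b^2 := by
  rw [Complex.sq_norm, Complex.normSq_apply]
  simp
  ring

theorem stmt2 (E : EuclideanSpace ℝ (Fin 2)) (hE : E ≠ 0) (R X : ℝ)
    (Imax : ℝ) (hI : 0 < Imax) :
    Convex ℝ {p : ℝ × ℝ | ∃ x : EuclideanSpace ℝ (Fin 2), ‖x‖ ≤ Imax ∧
      p = ((3 / 2) * R * ‖x‖ ^ 2 + (3 / 2) * ⟪E, x⟫,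
           (3 / 2) * X * ‖x‖ ^ 2 + (3 / 2) * ⟪Jv E, x⟫)} := by
  set c : ℂ := (R:ℂ) + (X:ℂ)*Complex.I with hc
  set e : ℂ := (E 0 : ℂ) + (E 1 : ℂ)*Complex.I with he'
  have he : e ≠ 0 := by
    intro h
    apply hE
    have h0 : E 0 = 0 ∧ E 1 = 0 := by
      constructor
      · have := congrArg Complex.re h; simpa [he'] using this
      · have := congrArg Complex.im h; simpa [he'] using this
    ext i
    fin_cases i <;> simp [h0.1, h0.2]
  set L : ℂ →ₗ[ℝ] ℝ × ℝ :=
    LinearMap.prod ((3/2 : ℝ) • Complex.reLm) ((3/2 : ℝ) • Complex.imLm) with hL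
  have hset : {p : ℝ × ℝ | ∃ x : EuclideanSpace ℝ (Fin 2), ‖x‖ ≤ Imax ∧
      p = ((3 / 2) * R * ‖x‖ ^ 2 + (3 / 2) * ⟪E, x⟫,
           (3 / 2) * X * ‖x‖ ^ 2 + (3 / 2) * ⟪Jv E, x⟫)}
      = L '' {w : ℂ | ∃ u : ℂ, ‖u‖ ≤ Imax ∧ w = c * (‖u‖ : ℂ)^2 + e * u} := by
    ext p
    simp only [Set.mem_setOf_eq, Set.mem_image]
    constructor
    · rintro ⟨x, hx, rfl⟩
      set u : ℂ := (x 0 : ℂ) - (x 1 : ℂ)*Complex.I with hu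
      have hur : u.re = x 0 := by simp [hu]
      have hui : u.im = -(x 1) := by simp [hu]
      have hnu : ‖u‖ = ‖x‖ := by
        have h1 : ‖u‖^2 = ‖x‖^2 := by
          rw [Complex.sq_norm, Complex.normSq_apply, hur, hui, norm_sq_euc]
          ring
        rw [← Real.sqrt_sq (norm_nonneg u), h1, Real.sqrt_sq (norm_nonneg x)]
      refine ⟨c * (‖u‖ : ℂ)^2 + e * u, ⟨u, by rw [hnu]; exact hx, rfl⟩, ?_⟩
      have hre : (c * (‖u‖ : ℂ)^2 + e * u).re = R * ‖x‖^2 + (E 0 * x 0 + E 1 * x 1) := by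
        simp [hc, he', Complex.mul_re, Complex.mul_im, hur, hui, hnu, ← Complex.ofReal_pow]
        try ring
      have him : (c * (‖u‖ : ℂ)^2 + e * u).im = X * ‖x‖^2 + (E 1 * x 0 - E 0 * x 1) := by
        simp [hc, he', Complex.mul_re, Complex.mul_im, hur, hui, hnu, ← Complex.ofReal_pow]
        try ring
      simp only [hL, LinearMap.prod_apply, Function.prod, LinearMap.smul_apply, Complex.reLm_coe,
        Complex.imLm_coe, smul_eq_mul, hre, him, Prod.mk.injEq]
      rw [inner_euc E x, inner_euc (Jv E) x, Jv0, Jv1]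
      constructor <;> ring
    · rintro ⟨w, ⟨u, hu, rfl⟩, rfl⟩
      refine ⟨toE ![u.re, -u.im], ?_, ?_⟩
      · have h1 : ‖toE ![u.re, -u.im]‖^2 = ‖u‖^2 := by
          rw [norm_sq_euc, Complex.sq_norm, Complex.normSq_apply]
          show (u.re)^2 + (-u.im)^2 = _
          ring
        have h2 : ‖toE ![u.re, -u.im]‖ = ‖u‖ := by
          rw [← Real.sqrt_sq (norm_nonneg _), h1, Real.sqrt_sq (norm_nonneg u)]
        rw [h2]; exact hu
      · set x := toE ![u.re, -u.im] with hx
        have hx0 : x 0 = u.re := rfl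
        have hx1 : x 1 = -u.im := rfl
        have h1 : ‖x‖^2 = ‖u‖^2 := by
          rw [norm_sq_euc, Complex.sq_norm, Complex.normSq_apply, hx0, hx1]
          ring
        have hre : (c * (‖u‖ : ℂ)^2 + e * u).re = R * ‖x‖^2 + (E 0 * x 0 + E 1 * x 1) := by
          simp [hc, he', Complex.mul_re, Complex.mul_im, hx0, hx1, h1, ← Complex.ofReal_pow]
          try ring
        have him : (c * (‖u‖ : ℂ)^2 + e * u).im = X * ‖x‖^2 + (E 1 * x 0 - E 0 * x 1) := by
          simp [hc, he', Complex.mul_re, Complex.mul_im, hx0, hx1, h1, ← Complex.ofReal_pow]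
          try ring
        simp only [hL, LinearMap.prod_apply, Function.prod, LinearMap.smul_apply, Complex.reLm_coe,
          Complex.imLm_coe, smul_eq_mul, hre, him, Prod.mk.injEq]
        rw [inner_euc E x, inner_euc (Jv E) x, Jv0, Jv1]
        constructor <;> ring
  rw [hset]
  exact (convexS c e he Imax).linear_image L
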